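/- Fix an integer m ≥ 1. If x is a sequence of positive reals belonging to C_∞^G(Δ_G^m) with x_1 = x_2 = ⋯ = x_m = 1, then the sequence k ↦ (1/k) · |Δ^{m-1} (log x)_k| is bounded. (In geometric notation: sup_k e^{k^{-1}} ⊙ |Δ_G^{m-1} x_k|_G < ∞.) -/
import Mathlib


/-- Classical `m`-th order forward difference
`Δ^m y_k = ∑_{v=0}^m (−1)^v C(m,v) y_{k+v}`. -/
noncomputable def fdiff (m : ℕ) (y : ℕ → ℝ) (k : ℕ) : ℝ :=
  ∑ v ∈ Finset.range (m + 1), (-1 : ℝ) ^ v * (m.choose v : ℝ) * y (k + v)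

/-- The Cesàro mean `(1/n) ∑_{k=1}^n Δ^m (log x)_k`. -/
noncomputable def cesaro (m : ℕ) (x : ℕ → ℝ) (n : ℕ) : ℝ :=
  (1 / (n : ℝ)) * ∑ k ∈ Finset.Icc 1 n, fdiff m (fun j => Real.log (x j)) k

/-- Membership in the bigeometric Cesàro difference space `C_p^G(Δ_G^m)`. -/
def memCpG (m : ℕ) (p : ℝ) (x : ℕ → ℝ) : Prop :=
  (∀ k, 1 ≤ k → 0 < x k) ∧ Summable (fun n : ℕ => |cesaro m x n| ^ p)

/-- Membership in the bigeometric Cesàro difference space `C_∞^G(Δ_G^m)`. -/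
def memCinfG (m : ℕ) (x : ℕ → ℝ) : Prop :=
  (∀ k, 1 ≤ k → 0 < x k) ∧ ∃ C : ℝ, ∀ n : ℕ, |cesaro m x n| ≤ C

/-- The forward-difference recursion `Δ^{j+1} y_k = Δ^j y_k − Δ^j y_{k+1}`. -/
lemma fdiff_succ (j : ℕ) (y : ℕ → ℝ) (k : ℕ) :
    fdiff (j+1) y k = fdiff j y k - fdiff j y (k+1) := by
  unfold fdiff
  have e1 : ∀ v : ℕ, k + (v+1) = k + 1 + v := fun v => by ring
  rw [Finset.sum_range_succ' (fun v => (-1:ℝ)^v * ((j+1).choose v : ℝ) * y (k+v)) (j+1),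
      Finset.sum_range_succ' (fun v => (-1:ℝ)^v * (j.choose v : ℝ) * y (k+v)) j]
  have h1 : ∑ v ∈ Finset.range (j+1), (-1:ℝ)^(v+1) * ((j+1).choose (v+1) : ℝ) * y (k+(v+1))
      = ∑ v ∈ Finset.range (j+1), ((-1:ℝ)^(v+1) * (j.choose v : ℝ) * y (k+1+v)
        + (-1:ℝ)^(v+1) * (j.choose (v+1) : ℝ) * y (k+(v+1))) := by
    refine Finset.sum_congr rfl fun v _ => ?_
    rw [Nat.choose_succ_succ, e1 v]; push_cast; ring
  rw [h1, Finset.sum_add_distrib]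
  have h2 : ∑ v ∈ Finset.range (j+1), (-1:ℝ)^(v+1) * (j.choose (v+1) : ℝ) * y (k+(v+1))
      = ∑ v ∈ Finset.range j, (-1:ℝ)^(v+1) * (j.choose (v+1) : ℝ) * y (k+(v+1)) := by
    rw [Finset.sum_range_succ]
    simp [Nat.choose_succ_self]
  rw [h2]
  have h3 : ∑ v ∈ Finset.range (j+1), (-1:ℝ)^(v+1) * (j.choose v : ℝ) * y (k+1+v)
      = -∑ v ∈ Finset.range (j+1), (-1:ℝ)^v * (j.choose v : ℝ) * y (k+1+v) := by
    rw [← Finset.sum_neg_distrib]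
    exact Finset.sum_congr rfl fun v _ => by rw [pow_succ]; ring
  rw [h3]
  simp only [Nat.choose_zero_right, pow_zero, Nat.cast_one]
  ring

/-- Telescoping: `∑_{k=1}^n Δ^{j+1} y_k = Δ^j y_1 − Δ^j y_{n+1}`. -/
lemma sum_fdiff (j : ℕ) (y : ℕ → ℝ) (n : ℕ) :
    ∑ k ∈ Finset.Icc 1 n, fdiff (j+1) y k = fdiff j y 1 - fdiff j y (n+1) := by
  induction n with
  | zero => simp
  | succ n ih =>
      rw [Finset.sum_Icc_succ_top (by omega : 1 ≤ n+1), ih, fdiff_succ]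
      ring

/-- if `x ∈ υC_∞^G(Δ_G^m)` (i.e. `x ∈ C_∞^G(Δ_G^m)` with
`x_1 = ⋯ = x_m = 1`), then `sup_k e^{k^{-1}} ⊙ |Δ_G^{m-1} x_k|_G < ∞`, i.e.
the sequence `k ↦ (1/k)·|Δ^{m-1}(log x)_k|` is bounded. -/
theorem upsilonCinfG_fdiff_pred_bounded (m : ℕ) (hm : 1 ≤ m) (x : ℕ → ℝ)
    (hx : memCinfG m x) (hone : ∀ i, 1 ≤ i → i ≤ m → x i = 1) :
    ∃ C : ℝ, ∀ k : ℕ,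
      (1 / (k : ℝ)) * |fdiff (m - 1) (fun j => Real.log (x j)) k| ≤ C := by
  obtain ⟨hpos, C, hC⟩ := hx
  have hC0 : 0 ≤ C := le_trans (abs_nonneg _) (hC 0)
  set y : ℕ → ℝ := fun j => Real.log (x j) with hy
  have hy1 : fdiff (m - 1) y 1 = 0 := by
    unfold fdiff
    refine Finset.sum_eq_zero fun v hv => ?_
    have hv' : v ≤ m - 1 := by
      have := Finset.mem_range.mp hv; omega
    have : x (1 + v) = 1 := hone _ (by omega) (by omega)
    simp [hy, this]
  have hmm : m - 1 + 1 = m := by omega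
  refine ⟨C, fun k => ?_⟩
  match k with
  | 0 => simpa using hC0
  | 1 =>
      rw [hy1]
      simpa using hC0
  | (n+2) =>
      have hsum : ∑ k ∈ Finset.Icc 1 (n+1), fdiff m y k = - fdiff (m-1) y (n+2) := by
        have h := sum_fdiff (m-1) y (n+1)
        rw [hmm] at h
        rw [h, hy1]; ring
      have hces : cesaro m x (n+1) = (1 / ((n+1 : ℕ) : ℝ)) * (- fdiff (m-1) y (n+2)) := by
        rw [cesaro, hsum]
      have habs : |fdiff (m-1) y (n+2)| = ((n+1 : ℕ) : ℝ) * |cesaro m x (n+1)| := by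
        rw [hces, abs_mul, abs_neg]
        have : |(1 / ((n+1 : ℕ) : ℝ))| = 1 / ((n+1 : ℕ) : ℝ) := by
          rw [abs_of_pos]; positivity
        rw [this]
        field_simp
      rw [habs]
      have h1 : ((n+1 : ℕ) : ℝ) / ((n+2 : ℕ) : ℝ) ≤ 1 := by
        rw [div_le_one (by positivity)]; push_cast; linarith
      have h2 : |cesaro m x (n+1)| ≤ C := hC (n+1)
      have habs0 : 0 ≤ |cesaro m x (n+1)| := abs_nonneg _
      calc (1 / ((n+2 : ℕ) : ℝ)) * (((n+1 : ℕ) : ℝ) * |cesaro m x (n+1)|)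
          = (((n+1 : ℕ) : ℝ) / ((n+2 : ℕ) : ℝ)) * |cesaro m x (n+1)| := by ring
        _ ≤ 1 * C := mul_le_mul h1 h2 habs0 zero_le_one
        _ = C := one_mul C
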